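/- Let a, x₀ > 0 and c > 0, and define the sequence (x_i) by x_{i+1} = (1 + min((a·x_i)^c, 1))·x_i. For B > 0 let k(B) be the minimum integer i with x_i ≥ B. Then there is a constant C > 0 depending only on c such that k(B) ≤ C·( (a·x₀)^{−c} + log(1 + B/x₀) ) for every B > 0. -/

import Mathlib

lemma aux_inv_step (c y : ℝ) (hc : 0 < c) (hy0 : 0 < y) (hy1 : y ≤ 1) :
    (y * (1 + y) ^ c)⁻¹ ≤ y⁻¹ - c / (c + 2) := by
  have h1y : (0:ℝ) < 1 + y := by linarith
  have hlog : y / (1 + y) ≤ Real.log (1 + y) := by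
    have h := Real.log_le_sub_one_of_pos (x := (1+y)⁻¹) (by positivity)
    rw [Real.log_inv] at h
    have heq : 1 - (1+y)⁻¹ = y / (1+y) := by field_simp; ring
    linarith [heq ▸ (by linarith : 1 - (1+y)⁻¹ ≤ Real.log (1+y))]
  have hlog2 : y / 2 ≤ Real.log (1 + y) := by
    have h2 : y / 2 ≤ y / (1 + y) := by
      apply div_le_div_of_nonneg_left hy0.le h1y
      linarith
    linarith
  have hpow : 1 + c * (y/2) ≤ (1+y)^c := by
    have h1 : (1+y)^c = Real.exp (Real.log (1+y) * c) := by
      rw [Real.rpow_def_of_pos h1y]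
    have h2 : Real.log (1+y) * c + 1 ≤ Real.exp (Real.log (1+y) * c) :=
      Real.add_one_le_exp _
    have h3 : c * (y/2) ≤ Real.log (1+y) * c := by nlinarith
    linarith [h1 ▸ (by linarith : 1 + c * (y/2) ≤ Real.exp (Real.log (1+y) * c))]
  have key : y * (1 + c*(y/2)) ≤ y * (1+y)^c := by nlinarith
  have hpos : 0 < y * (1 + c*(y/2)) := by positivity
  have hinv : (y * (1+y)^c)⁻¹ ≤ (y * (1 + c*(y/2)))⁻¹ :=
    inv_anti₀ hpos key
  have heq2 : (y * (1 + c*(y/2)))⁻¹ = y⁻¹ - (c/2)/(1 + c/2*y) := by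
    have h2 : (0:ℝ) < 1 + c/2*y := by nlinarith
    field_simp
    ring
  have hle : c/(c+2) ≤ (c/2)/(1 + c/2*y) := by
    rw [div_le_div_iff₀ (by positivity) (by nlinarith)]
    nlinarith [mul_le_mul_of_nonneg_left hy1 (mul_nonneg hc.le hc.le)]
  rw [heq2] at hinv
  linarith

/-- For the sequence `x_{i+1} = (1 + min((a·x_i)^c, 1))·x_i` with
`a, x₀, c > 0`, the first index reaching level `B` is `O((a·x₀)^{−c} + log(1 + B/x₀))`,
with a constant depending only on `c`.  (Since the sequence is increasing, the bound on
the minimal index `k(B)` is expressed as: some index `k` with `x_k ≥ B` satisfies the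
bound.) -/
theorem hitting_time_bound_geometric (c : ℝ) (hc : 0 < c) :
    ∃ C > (0 : ℝ), ∀ a x₀ : ℝ, 0 < a → 0 < x₀ →
      ∀ x : ℕ → ℝ, x 0 = x₀ →
        (∀ i, x (i + 1) = (1 + min ((a * x i) ^ c) 1) * x i) →
        ∀ B > (0 : ℝ), ∃ k : ℕ, B ≤ x k ∧
          (k : ℝ) ≤ C * ((a * x₀) ^ (-c) + Real.log (1 + B / x₀)) := by
  have hlog2 : (0:ℝ) < Real.log 2 := Real.log_pos one_lt_two
  set δ : ℝ := c / (c + 2) with hδdef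
  have hδ : 0 < δ := by positivity
  refine ⟨1/δ + 2 / Real.log 2, by positivity, ?_⟩
  intro a x₀ ha hx₀ x hx0 hrec B hB
  have hpos : ∀ i, 0 < x i := by
    intro i; induction i with
    | zero => rw [hx0]; exact hx₀
    | succ n ih =>
      rw [hrec]
      have h1 : 0 ≤ (a * x n)^c := (Real.rpow_pos_of_pos (mul_pos ha ih) c).le
      have h2 : 0 ≤ min ((a * x n)^c) 1 := le_min h1 zero_le_one
      nlinarith
  have hmono : ∀ i, x i ≤ x (i+1) := by
    intro i
    rw [hrec i]
    have h1 : 0 ≤ (a * x i)^c := (Real.rpow_pos_of_pos (mul_pos ha (hpos i)) c).le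
    have h2 : 0 ≤ min ((a * x i)^c) 1 := le_min h1 zero_le_one
    nlinarith [hpos i]
  have hMono : Monotone x := monotone_nat_of_le_succ hmono
  have hstep : ∀ i, a * x i < 1 → (a * x (i+1)) ^ (-c) ≤ (a * x i) ^ (-c) - δ := by
    intro i hi
    have hu : 0 < a * x i := mul_pos ha (hpos i)
    set y := (a * x i) ^ c with hy
    have hy0 : 0 < y := Real.rpow_pos_of_pos hu c
    have hy1 : y ≤ 1 := Real.rpow_le_one hu.le hi.le hc.le
    have hxx : a * x (i+1) = (1 + y) * (a * x i) := by
      rw [hrec, min_eq_left hy1]; ring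
    have h1 : (a * x (i+1)) ^ (-c) = ((1+y)^c * y)⁻¹ := by
      rw [hxx, Real.rpow_neg (by positivity), Real.mul_rpow (by positivity) hu.le]
    have h2 : (a * x i) ^ (-c) = y⁻¹ := by rw [Real.rpow_neg hu.le]
    rw [h1, h2, mul_comm]
    exact aux_inv_step c y hc hy0 hy1
  have hex : ∃ n, 1 ≤ a * x n := by
    by_contra h
    push_neg at h
    have hchain : ∀ m : ℕ, (a * x m) ^ (-c) ≤ (a * x 0) ^ (-c) - m * δ := by
      intro m; induction m with
      | zero => simp
      | succ p ih =>
        have h1 := hstep p (h p)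
        push_cast
        linarith
    obtain ⟨m, hm⟩ := exists_nat_gt ((a * x 0) ^ (-c) / δ)
    have h1 := hchain m
    have h2 : 0 < (a * x m) ^ (-c) := Real.rpow_pos_of_pos (mul_pos ha (hpos m)) _
    rw [div_lt_iff₀ hδ] at hm
    linarith
  set n := Nat.find hex with hn
  have hn1 : 1 ≤ a * x n := Nat.find_spec hex
  have hnmin : ∀ i, i < n → a * x i < 1 := fun i hi => lt_of_not_ge (Nat.find_min hex hi)
  have hnbound : (n:ℝ) * δ ≤ (a * x₀) ^ (-c) := by
    have hchain : ∀ m, m ≤ n → (a * x m) ^ (-c) ≤ (a * x 0) ^ (-c) - m * δ := by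
      intro m; induction m with
      | zero => intro _; simp
      | succ p ih =>
        intro hp
        have hpn : p < n := lt_of_lt_of_le (Nat.lt_succ_self p) hp
        have h1 := hstep p (hnmin p hpn)
        have h2 := ih hpn.le
        push_cast
        linarith
    have h1 := hchain n le_rfl
    have h2 : 0 < (a * x n) ^ (-c) := Real.rpow_pos_of_pos (mul_pos ha (hpos n)) _
    rw [hx0] at h1
    linarith
  have hdbl : ∀ j : ℕ, 2^j * x n ≤ x (n + j) ∧ 1 ≤ a * x (n + j) := by
    intro j; induction j with
    | zero => simpa using hn1
    | succ p ih =>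
      have h1 : 1 ≤ (a * x (n+p)) ^ c := by
        calc (1:ℝ) = 1 ^ c := (Real.one_rpow c).symm
        _ ≤ (a * x (n+p)) ^ c := Real.rpow_le_rpow (by norm_num) ih.2 hc.le
      have hx' : x (n + p + 1) = 2 * x (n + p) := by
        rw [hrec, min_eq_right h1]; ring
      refine ⟨?_, ?_⟩
      · have : (2:ℝ)^(p+1) * x n = 2 * (2^p * x n) := by ring
        rw [show n + (p+1) = n + p + 1 from rfl, hx', this]
        linarith [ih.1]
      · rw [show n + (p+1) = n + p + 1 from rfl, hx']
        nlinarith [ih.2, mul_pos ha (hpos (n+p))]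
  set L := Real.log (1 + B / x₀) with hL
  have hL0 : 0 ≤ L := Real.log_nonneg (by nlinarith [div_pos hB hx₀])
  obtain ⟨j, hj1, hj2⟩ : ∃ j : ℕ, B ≤ 2^j * x₀ ∧ (j:ℝ) ≤ 2 * L / Real.log 2 := by
    by_cases hBx : B ≤ x₀
    · refine ⟨0, by simpa using hBx, ?_⟩
      have h := div_nonneg (by linarith : (0:ℝ) ≤ 2 * L) hlog2.le
      simpa using h
    · push_neg at hBx
      set t := Real.logb 2 (B / x₀) with ht
      have hB1 : 1 < B / x₀ := (one_lt_div hx₀).mpr hBx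
      have ht0 : 0 < t := Real.logb_pos one_lt_two hB1
      refine ⟨⌈t⌉₊, ?_, ?_⟩
      · have h2 : (B / x₀) = (2:ℝ) ^ t :=
          (Real.rpow_logb two_pos (by norm_num) (by positivity)).symm
        have h3 : (2:ℝ)^t ≤ (2:ℝ)^((⌈t⌉₊:ℕ) : ℝ) :=
          Real.rpow_le_rpow_left_iff one_lt_two |>.mpr (Nat.le_ceil t)
        rw [← Real.rpow_natCast 2 ⌈t⌉₊]
        calc B = (B/x₀) * x₀ := by field_simp
        _ = 2^t * x₀ := by rw [h2]
        _ ≤ 2^((⌈t⌉₊:ℕ):ℝ) * x₀ := mul_le_mul_of_nonneg_right h3 hx₀.le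
      · have h4 : (⌈t⌉₊:ℝ) < t + 1 := Nat.ceil_lt_add_one ht0.le
        have h5 : t ≤ L / Real.log 2 := by
          rw [show t = Real.log (B/x₀) / Real.log 2 from rfl]
          exact (div_le_div_iff_of_pos_right hlog2).mpr
            (Real.log_le_log (by positivity) (by linarith [div_pos hB hx₀]))
        have h6 : 1 ≤ L / Real.log 2 := by
          rw [le_div_iff₀ hlog2]
          have : Real.log 2 ≤ L := Real.log_le_log two_pos (by linarith)
          linarith
        have : 2 * L / Real.log 2 = L / Real.log 2 + L / Real.log 2 := by ring
        rw [this]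
        linarith
  refine ⟨n + j, ?_, ?_⟩
  · calc B ≤ 2^j * x₀ := hj1
    _ ≤ 2^j * x n := by
        have : x₀ ≤ x n := hx0 ▸ hMono (Nat.zero_le n)
        have h2 : (0:ℝ) ≤ 2^j := by positivity
        nlinarith
    _ ≤ x (n + j) := (hdbl j).1
  · have hφ0 : 0 ≤ (a * x₀)^(-c) := (Real.rpow_pos_of_pos (by positivity) _).le
    have hn' : (n:ℝ) ≤ (a*x₀)^(-c) / δ := by
      rw [le_div_iff₀ hδ]; exact hnbound
    have hδ' : 0 < 1/δ := by positivity
    have hl' : 0 < 2/Real.log 2 := by positivity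
    push_cast
    calc (n:ℝ) + j ≤ (a*x₀)^(-c)/δ + 2*L/Real.log 2 := add_le_add hn' hj2
    _ ≤ (1/δ + 2/Real.log 2) * ((a*x₀)^(-c) + L) := by
        have h1 : (a*x₀)^(-c)/δ = (1/δ) * (a*x₀)^(-c) := by ring
        have h2 : 2*L/Real.log 2 = (2/Real.log 2) * L := by ring
        rw [h1, h2]
        nlinarith [mul_nonneg hδ'.le hL0, mul_nonneg hl'.le hφ0]
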